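/- For integers κ ≥ 0, J ≥ 1 with κ < J, real T > 0 and real R, the derivative with respect to R of T^{κ-J} Σ_{ι=0}^{J-κ-1} binom(J-κ-1,ι) ((-1)^{J-κ-ι-1}/(2(J-ι)-1)) · (R²/(T+R²))^{J-ι-1/2} equals R^{2κ}/(T+R²)^{J+1/2}, for R > 0. -/

import Mathlib

open Real Finset

lemma rpow_key (R s : ℝ) (hR : 0 < R) (hs : 0 < s) (m κ ι J : ℕ) (hJ : J = ι + m + κ + 1) :
    (R ^ 2 / s) ^ ((m:ℝ) + κ - 1/2) =
      (R^2) ^ m * R ^ (2*κ) * s ^ ι * s ^ 2 / (R * s ^ ((J:ℝ) + 1/2)) := by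
  rw [Real.div_rpow (by positivity) hs.le]
  rw [show ((R:ℝ)^2)^m * R^(2*κ) * s^ι * s^2 = R ^ ((2*m+2*κ:ℕ):ℝ) * s ^ ((ι+2:ℕ):ℝ) by
    rw [Real.rpow_natCast, Real.rpow_natCast]; ring]
  rw [show ((R:ℝ)^2) ^ ((m:ℝ)+κ-1/2) = R ^ (2*((m:ℝ)+κ)-1) by
    rw [← Real.rpow_natCast R 2, ← Real.rpow_mul hR.le]; congr 1; push_cast; ring]
  rw [div_eq_div_iff (by positivity) (by positivity)]
  rw [show R * s^((J:ℝ)+1/2) = R^(1:ℝ) * s^((J:ℝ)+1/2) by rw [Real.rpow_one],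
      ← mul_assoc, ← Real.rpow_add hR, mul_assoc, ← Real.rpow_add hs]
  congr 1
  · congr 1; push_cast; ring
  · congr 1; push_cast [hJ]; ring

lemma term_eq (κ ι m J : ℕ) (hJ : J = ι + m + κ + 1) (T R s : ℝ)
    (hR : 0 < R) (hs : 0 < s) :
    ((J - κ - 1).choose ι : ℝ) * ((-1) ^ (J - κ - ι - 1) / (2 * ((J : ℝ) - ι) - 1)) *
      (2*R*T/s^2 * ((J:ℝ)-ι-1/2) * (R^2/s)^((J:ℝ)-ι-1/2-1))
    = s^ι * (-(R^2)) ^ (J - κ - 1 - ι) * ((J - κ - 1).choose ι : ℝ) *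
        (T * R^(2*κ) / s^((J:ℝ)+1/2)) := by
  have hm1 : J - κ - ι - 1 = m := by omega
  have hm2 : J - κ - 1 - ι = m := by omega
  have hJc : (J:ℝ) = (ι:ℝ) + m + κ + 1 := by exact_mod_cast congrArg (Nat.cast : ℕ → ℝ) hJ
  have hJR : (J:ℝ) - ι - 1/2 - 1 = (m:ℝ) + κ - 1/2 := by rw [hJc]; ring
  rw [hm1, hm2, hJR, rpow_key R s hR hs m κ ι J hJ, neg_pow, hJc]
  have h1 : s ^ ((J:ℝ)+1/2) ≠ 0 := (Real.rpow_pos_of_pos hs _).ne'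
  have h2 : 2*(((ι:ℝ)+m+κ+1)-ι)-1 ≠ 0 := by
    have : 2*(((ι:ℝ)+m+κ+1)-ι)-1 = 2*(m+κ)+1 := by ring
    rw [this]; positivity
  field_simp
  ring

theorem antiderivative_even_power (κ J : ℕ) (hκJ : κ < J) (T R : ℝ) (hT : 0 < T)
    (hR : 0 < R) :
    HasDerivAt
      (fun R : ℝ =>
        T ^ ((κ : ℤ) - J) *
          ∑ ι ∈ Finset.range (J - κ),
            ((J - κ - 1).choose ι : ℝ) * ((-1) ^ (J - κ - ι - 1) / (2 * ((J : ℝ) - ι) - 1)) *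
              (R ^ 2 / (T + R ^ 2)) ^ ((J : ℝ) - ι - 1 / 2))
      (R ^ (2 * κ) / (T + R ^ 2) ^ ((J : ℝ) + 1 / 2)) R := by
  have hs : 0 < T + R ^ 2 := by positivity
  have h1 : HasDerivAt (fun x : ℝ => x ^ 2) (2 * R) R := by
    simpa using hasDerivAt_pow 2 R
  have hg : HasDerivAt (fun x : ℝ => x ^ 2 / (T + x ^ 2)) (2 * R * T / (T + R ^ 2) ^ 2) R := by
    have := (h1.div (h1.const_add T) hs.ne' :
      HasDerivAt (fun x : ℝ => x ^ 2 / (T + x ^ 2)) _ R)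
    refine this.congr_deriv ?_
    ring
  have hterm : ∀ ι ∈ Finset.range (J - κ),
      HasDerivAt
        (fun x : ℝ =>
          ((J - κ - 1).choose ι : ℝ) * ((-1) ^ (J - κ - ι - 1) / (2 * ((J : ℝ) - ι) - 1)) *
            (x ^ 2 / (T + x ^ 2)) ^ ((J : ℝ) - ι - 1 / 2))
        (((J - κ - 1).choose ι : ℝ) * ((-1) ^ (J - κ - ι - 1) / (2 * ((J : ℝ) - ι) - 1)) *
          (2 * R * T / (T + R ^ 2) ^ 2 * ((J : ℝ) - ι - 1 / 2) *
            (R ^ 2 / (T + R ^ 2)) ^ ((J : ℝ) - ι - 1 / 2 - 1))) R := by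
    intro ι hι
    have := (hg.rpow_const (p := (J : ℝ) - ι - 1 / 2)
      (Or.inl (by positivity))).const_mul
      (((J - κ - 1).choose ι : ℝ) * ((-1) ^ (J - κ - ι - 1) / (2 * ((J : ℝ) - ι) - 1)))
    convert this using 1
  have hsum := (HasDerivAt.sum hterm).const_mul (T ^ ((κ : ℤ) - J))
  have key :
      T ^ ((κ : ℤ) - J) *
        ∑ ι ∈ Finset.range (J - κ),
          ((J - κ - 1).choose ι : ℝ) * ((-1) ^ (J - κ - ι - 1) / (2 * ((J : ℝ) - ι) - 1)) *
            (2 * R * T / (T + R ^ 2) ^ 2 * ((J : ℝ) - ι - 1 / 2) *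
              (R ^ 2 / (T + R ^ 2)) ^ ((J : ℝ) - ι - 1 / 2 - 1)) =
      R ^ (2 * κ) / (T + R ^ 2) ^ ((J : ℝ) + 1 / 2) := by
    have e1 : ∀ ι ∈ Finset.range (J - κ),
        ((J - κ - 1).choose ι : ℝ) * ((-1) ^ (J - κ - ι - 1) / (2 * ((J : ℝ) - ι) - 1)) *
          (2 * R * T / (T + R ^ 2) ^ 2 * ((J : ℝ) - ι - 1 / 2) *
            (R ^ 2 / (T + R ^ 2)) ^ ((J : ℝ) - ι - 1 / 2 - 1)) =
        (T + R ^ 2) ^ ι * (-(R ^ 2)) ^ (J - κ - 1 - ι) * ((J - κ - 1).choose ι : ℝ) *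
          (T * R ^ (2 * κ) / (T + R ^ 2) ^ ((J : ℝ) + 1 / 2)) := by
      intro ι hι
      obtain ⟨m, hm⟩ : ∃ m, J = ι + m + κ + 1 := by
        have := Finset.mem_range.mp hι
        exact ⟨J - κ - 1 - ι, by omega⟩
      exact term_eq κ ι m J hm T R (T + R ^ 2) hR hs
    rw [Finset.sum_congr rfl e1, ← Finset.sum_mul,
      show Finset.range (J - κ) = Finset.range ((J - κ - 1) + 1) from by congr 1; omega,
      ← add_pow (T + R ^ 2) (-(R ^ 2)) (J - κ - 1),
      show T + R ^ 2 + -(R ^ 2) = T from by ring]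
    have hone : T ^ ((κ : ℤ) - J) * T ^ (J - κ - 1) * T = 1 := by
      have h0 : ((κ : ℤ) - J) + ((J - κ - 1 : ℕ) : ℤ) + 1 = 0 := by omega
      calc T ^ ((κ : ℤ) - J) * T ^ (J - κ - 1) * T
          = T ^ (((κ : ℤ) - J) + ((J - κ - 1 : ℕ) : ℤ) + 1) := by
            rw [← zpow_natCast T (J - κ - 1), ← zpow_add₀ hT.ne', ← zpow_add_one₀ hT.ne']
        _ = 1 := by rw [h0, zpow_zero]
    rw [show T ^ ((κ : ℤ) - J) * (T ^ (J - κ - 1) * (T * R ^ (2 * κ) / (T + R ^ 2) ^ ((J : ℝ) + 1 / 2))) =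
        T ^ ((κ : ℤ) - J) * T ^ (J - κ - 1) * T * (R ^ (2 * κ) / (T + R ^ 2) ^ ((J : ℝ) + 1 / 2)) from by ring,
      hone, one_mul]
  rw [← key]
  simpa only [Finset.sum_apply] using hsum
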